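/- arXiv:1701.00187 — 11 statements merged into one kernel-verified Lean document; each statement's English description precedes it below -/
import Mathlib

section
/- Let T : V → ℝ be a Bellman fixed point and let (T_i) be the chase-time iteration. Then for every i ≥ 1 and every vertex v ∈ V, T_i(v) ≥ T(v). -/
/-- Let `T` be a Bellman fixed point and `(Tseq i)` the chase-time
iteration. Then for every `i ≥ 1` and every vertex `v`, `Tseq i v ≥ T v`. -/
theorem stmt_1 {V : Type*} [Fintype V] [Nonempty V]
    (N : V → Finset V) (hN : ∀ v, v ∈ N v)
    (p : V → ℝ) (hp : ∀ v, 0 < p v ∧ p v ≤ 1)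
    (T : V → ℝ)
    (hT : ∀ v, T v = 1 + (1 - p v) * (N v).inf' ⟨v, hN v⟩ T)
    (Tseq : ℕ → V → ℝ)
    (hTseq1 : ∀ v, Tseq 1 v = 1 / p v)
    (hTseqS : ∀ i, 1 ≤ i → ∀ v,
      Tseq (i + 1) v =
        min (Tseq i v) (1 + (1 - p v) * (N v).inf' ⟨v, hN v⟩ (Tseq i))) :
    ∀ i, 1 ≤ i → ∀ v, T v ≤ Tseq i v := by
  have base : ∀ v, T v ≤ 1 / p v := by
    intro v
    have hpv := (hp v).1
    have h1 : (N v).inf' ⟨v, hN v⟩ T ≤ T v := Finset.inf'_le _ (hN v)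
    have h2 : (1 : ℝ) - p v ≥ 0 := by linarith [(hp v).2]
    have h3 : T v ≤ 1 + (1 - p v) * T v := by
      nlinarith [hT v, mul_le_mul_of_nonneg_left h1 h2]
    rw [le_div_iff₀ hpv]; nlinarith
  intro i
  induction i with
  | zero => intro h; omega
  | succ n ih =>
    intro _ v
    rcases Nat.eq_zero_or_pos n with h | hn
    · subst h; rw [hTseq1 v]; exact base v
    · rw [hTseqS n hn v]
      refine le_min (ih hn v) ?_
      rw [hT v]
      have h2 : (1 : ℝ) - p v ≥ 0 := by linarith [(hp v).2]
      have hinf : (N v).inf' ⟨v, hN v⟩ T ≤ (N v).inf' ⟨v, hN v⟩ (Tseq n) := by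
        obtain ⟨u, hu, hequ⟩ := Finset.exists_mem_eq_inf' ⟨v, hN v⟩ (Tseq n)
        rw [hequ]
        exact le_trans (Finset.inf'_le _ hu) (ih hn u)
      nlinarith
end

section
/- Let T : V → ℝ be a Bellman fixed point and suppose the vertex v has shortest chase length 1 with respect to T (equivalently, T(v) = 1/p(v)). Then p(v) = max_{u ∈ N(v)} p(u), i.e., p(u) ≤ p(v) for every u ∈ N(v). -/
/-- A chase path with respect to `T`: a sequence `vs 0, vs 1, …, vs k` such that
each step moves to a closed neighbor and `T (vs i) = 1 + (1 - p (vs i)) * T (vs (i+1))`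
for `0 ≤ i < k`, and the last vertex satisfies `T (vs k) = 1 + (1 - p (vs k)) * T (vs k)`. -/
def IsChasePath {V : Type*} (N : V → Finset V) (p T : V → ℝ) (k : ℕ) (vs : ℕ → V) : Prop :=
  (∀ i < k, vs (i + 1) ∈ N (vs i) ∧ T (vs i) = 1 + (1 - p (vs i)) * T (vs (i + 1))) ∧
    T (vs k) = 1 + (1 - p (vs k)) * T (vs k)

/-- A shortest chase path: a chase path starting at `vs 0` such that no chase path
starting at the same vertex has strictly fewer vertices. -/
def IsShortestChasePath {V : Type*} (N : V → Finset V) (p T : V → ℝ) (k : ℕ) (vs : ℕ → V) : Prop :=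
  IsChasePath N p T k vs ∧
    ∀ (k' : ℕ) (vs' : ℕ → V), vs' 0 = vs 0 → IsChasePath N p T k' vs' → k ≤ k'

/-- The vertex `v` has shortest chase length `n`: some shortest chase path starting
at `v` has exactly `n` vertices (i.e. `n = k + 1` where `k` is its number of edges). -/
def HasShortestChaseLength {V : Type*} (N : V → Finset V) (p T : V → ℝ) (v : V) (n : ℕ) : Prop :=
  ∃ (k : ℕ) (vs : ℕ → V), vs 0 = v ∧ IsShortestChasePath N p T k vs ∧ n = k + 1

/-- If the vertex `v` has shortest chase length `1` with respect to a
Bellman fixed point `T` (equivalently `T v = 1 / p v`), then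
`p v = max_{u ∈ N v} p u`, i.e. `p u ≤ p v` for every `u ∈ N v`. -/
theorem stmt_5 {V : Type*} [Fintype V] [Nonempty V]
    (N : V → Finset V) (hN : ∀ v, v ∈ N v)
    (p : V → ℝ) (hp : ∀ v, 0 < p v ∧ p v ≤ 1)
    (T : V → ℝ)
    (hT : ∀ v, T v = 1 + (1 - p v) * (N v).inf' ⟨v, hN v⟩ T)
    (v : V) (hlen : HasShortestChaseLength N p T v 1) :
    p v = (N v).sup' ⟨v, hN v⟩ p ∧ ∀ u ∈ N v, p u ≤ p v := by

  obtain ⟨k, vs, hvs0, ⟨⟨_, hfix⟩, _⟩, hk⟩ := hlen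
  have hk0 : k = 0 := by omega
  rw [hk0, hvs0] at hfix
  -- p v * T v = 1
  have hpvTv : p v * T v = 1 := by nlinarith [hfix]
  have hpv := hp v
  have key : ∀ u ∈ N v, p u ≤ p v := by
    intro u hu
    rcases eq_or_lt_of_le hpv.2 with h1 | h1
    · calc p u ≤ 1 := (hp u).2
        _ = p v := h1.symm
    · -- p v < 1, so inf' = T v
      have hinf : (N v).inf' ⟨v, hN v⟩ T = T v := by
        have := hT v
        have h2 : (1 - p v) * ((N v).inf' ⟨v, hN v⟩ T - T v) = 0 := by nlinarith
        have h3 : (1 - p v) ≠ 0 := by linarith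
        have := mul_eq_zero.mp h2
        rcases this with h | h
        · exact absurd h h3
        · linarith
      have hTu : T v ≤ T u := hinf ▸ Finset.inf'_le T hu
      have hTule : p u * T u ≤ 1 := by
        have h4 : (N u).inf' ⟨u, hN u⟩ T ≤ T u := Finset.inf'_le T (hN u)
        have h5 := hT u
        nlinarith [(hp u).2]
      have hTvpos : 0 < T v := by
        have := hpvTv
        nlinarith [hpv.1]
      nlinarith [(hp u).1]
  refine ⟨le_antisymm (Finset.le_sup' p (hN v)) (Finset.sup'_le _ _ key), key⟩
end

section
/- Let T : V → ℝ be a Bellman fixed point, let (T_i) be the chase-time iteration, and suppose the vertex v has shortest chase length k with respect to T. Then T_k(v) = T(v). -/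
/-- Let `T` be a Bellman fixed point, `(Tseq i)` the chase-time
iteration, and suppose `v` has shortest chase length `k` with respect to `T`.
Then `Tseq k v = T v`. -/
theorem stmt_6 {V : Type*} [Fintype V] [Nonempty V]
    (N : V → Finset V) (hN : ∀ v, v ∈ N v)
    (p : V → ℝ) (hp : ∀ v, 0 < p v ∧ p v ≤ 1)
    (T : V → ℝ)
    (hT : ∀ v, T v = 1 + (1 - p v) * (N v).inf' ⟨v, hN v⟩ T)
    (Tseq : ℕ → V → ℝ)
    (hTseq1 : ∀ v, Tseq 1 v = 1 / p v)
    (hTseqS : ∀ i, 1 ≤ i → ∀ v,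
      Tseq (i + 1) v =
        min (Tseq i v) (1 + (1 - p v) * (N v).inf' ⟨v, hN v⟩ (Tseq i)))
    (v : V) (k : ℕ) (hlen : HasShortestChaseLength N p T v k) :
    Tseq k v = T v := by
  obtain ⟨k', vs, hvs0, ⟨⟨hstep, hlast⟩, -⟩, hk⟩ := hlen
  subst hk
  -- lower bound: T u ≤ Tseq i u for all i ≥ 1
  have hlow : ∀ i, 1 ≤ i → ∀ u, T u ≤ Tseq i u := by
    intro i hi
    induction i with
    | zero => omega
    | succ n ih =>
      intro u
      rcases Nat.eq_or_lt_of_le hi with h1 | h1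
      · rw [← h1, hTseq1]
        have hpu := hp u
        have hinf : (N u).inf' ⟨u, hN u⟩ T ≤ T u := Finset.inf'_le _ (hN u)
        have hTu := hT u
        rw [le_div_iff₀ hpu.1]
        nlinarith [hpu.1, hpu.2]
      · have hn : 1 ≤ n := by omega
        rw [hTseqS n hn u]
        refine le_min (ih hn u) ?_
        have hinf : (N u).inf' ⟨u, hN u⟩ T ≤ (N u).inf' ⟨u, hN u⟩ (Tseq n) :=
          Finset.le_inf' _ _ fun w hw => le_trans (Finset.inf'_le _ hw) (ih hn w)
        have hpu := hp u
        calc T u = 1 + (1 - p u) * (N u).inf' ⟨u, hN u⟩ T := hT u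
          _ ≤ 1 + (1 - p u) * (N u).inf' ⟨u, hN u⟩ (Tseq n) := by nlinarith [hpu.2]
  -- last vertex has T = 1/p
  have hlastval : T (vs k') = 1 / p (vs k') := by
    have hpk := hp (vs k')
    rw [eq_div_iff (ne_of_gt hpk.1)]
    nlinarith [hlast]
  -- upper bound along the path
  have hup : ∀ m, m ≤ k' → Tseq (m + 1) (vs (k' - m)) ≤ T (vs (k' - m)) := by
    intro m
    induction m with
    | zero =>
      intro _
      rw [Nat.sub_zero, hTseq1, hlastval]
    | succ n ih =>
      intro hm
      have hnk : n ≤ k' := by omega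
      have hidx : k' - (n + 1) + 1 = k' - n := by omega
      set w := vs (k' - (n + 1)) with hw
      have hi : k' - (n + 1) < k' := by omega
      obtain ⟨hmem, heq⟩ := hstep (k' - (n + 1)) hi
      rw [hidx] at hmem heq
      have hpu := hp w
      rw [hTseqS (n + 1) (by omega) w]
      refine min_le_of_right_le ?_
      have hinf : (N w).inf' ⟨w, hN w⟩ (Tseq (n + 1)) ≤ Tseq (n + 1) (vs (k' - n)) :=
        Finset.inf'_le _ hmem
      have := ih hnk
      calc 1 + (1 - p w) * (N w).inf' ⟨w, hN w⟩ (Tseq (n + 1))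
          ≤ 1 + (1 - p w) * T (vs (k' - n)) := by nlinarith [hpu.2]
        _ = T w := heq.symm
  have h1 := hup k' le_rfl
  simp only [Nat.sub_self] at h1
  rw [hvs0] at h1
  have h2 := hlow (k' + 1) (by omega) v
  linarith
end

section
/- Let T : V → ℝ be a Bellman fixed point. Every shortest chase path with respect to T is simple, i.e., it visits no vertex more than once. -/
/-- Every shortest chase path with respect to a Bellman fixed point `T`
is simple, i.e. it visits no vertex more than once. -/
theorem stmt_7 {V : Type*} [Fintype V] [Nonempty V]
    (N : V → Finset V) (hN : ∀ v, v ∈ N v)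
    (p : V → ℝ) (hp : ∀ v, 0 < p v ∧ p v ≤ 1)
    (T : V → ℝ)
    (hT : ∀ v, T v = 1 + (1 - p v) * (N v).inf' ⟨v, hN v⟩ T)
    (k : ℕ) (vs : ℕ → V)
    (hpath : IsShortestChasePath N p T k vs) :
    ∀ i j, i ≤ k → j ≤ k → vs i = vs j → i = j := by
  obtain ⟨⟨hstep, hend⟩, hmin⟩ := hpath
  have key : ∀ a b, a < b → b ≤ k → vs a = vs b → False := by
    intro a b hab hbk heq
    set d := b - a with hd
    set vs' : ℕ → V := fun n => if n < a then vs n else vs (n + d) with hvs'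
    have hshift : ∀ n, a ≤ n → vs' n = vs (n + d) := by
      intro n hn
      simp [hvs', Nat.not_lt.mpr hn]
    have hval : ∀ n, n ≤ a → vs' n = vs n := by
      intro n hn
      rcases lt_or_eq_of_le hn with h | h
      · simp [hvs', h]
      · subst h
        rw [hshift n le_rfl]
        have : n + d = b := by omega
        rw [this, ← heq]
    have h0 : vs' 0 = vs 0 := hval 0 (Nat.zero_le _)
    have hchase : IsChasePath N p T (k - d) vs' := by
      constructor
      · intro n hn
        rcases lt_or_ge n a with h | h
        · have h1 : vs' n = vs n := hval n h.le
          have h2 : vs' (n + 1) = vs (n + 1) := by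
            rcases lt_or_eq_of_le (Nat.succ_le_of_lt h) with h' | h'
            · exact hval _ h'.le
            · rw [hshift _ (le_of_eq h'.symm)]
              have : n + 1 + d = b := by omega
              rw [this, ← heq, ← h']
          rw [h1, h2]
          exact hstep n (by omega)
        · have h1 : vs' n = vs (n + d) := hshift n h
          have h2 : vs' (n + 1) = vs (n + 1 + d) := hshift _ (by omega)
          rw [h1, h2]
          have : n + 1 + d = n + d + 1 := by omega
          rw [this]
          exact hstep (n + d) (by omega)
      · have h1 : vs' (k - d) = vs (k - d + d) := hshift _ (by omega)
        have : k - d + d = k := by omega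
        rw [h1, this]
        exact hend
    have := hmin (k - d) vs' h0 hchase
    omega
  intro i j hik hjk heq
  rcases lt_trichotomy i j with h | h | h
  · exact absurd (key i j h hjk heq) (fun x => x)
  · exact h
  · exact absurd (key j i h hik heq.symm) (fun x => x)
end

section
/- Let T : V → ℝ be a Bellman fixed point, let (T_i) be the chase-time iteration, and suppose every vertex has at least one chase path with respect to T. Then, with n = |V|, T_n(v) = T(v) for every vertex v, and moreover T_i(v) = T(v) for every i ≥ n. -/
/-- Let `T` be a Bellman fixed point, `(Tseq i)` the chase-time
iteration, and suppose every vertex has at least one chase path with respect to `T`.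
Then with `n = |V|`, `Tseq n v = T v` for every vertex `v`, and moreover
`Tseq i v = T v` for every `i ≥ n`. -/
theorem stmt_8 {V : Type*} [Fintype V] [Nonempty V]
    (N : V → Finset V) (hN : ∀ v, v ∈ N v)
    (p : V → ℝ) (hp : ∀ v, 0 < p v ∧ p v ≤ 1)
    (T : V → ℝ)
    (hT : ∀ v, T v = 1 + (1 - p v) * (N v).inf' ⟨v, hN v⟩ T)
    (Tseq : ℕ → V → ℝ)
    (hTseq1 : ∀ v, Tseq 1 v = 1 / p v)
    (hTseqS : ∀ i, 1 ≤ i → ∀ v,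
      Tseq (i + 1) v =
        min (Tseq i v) (1 + (1 - p v) * (N v).inf' ⟨v, hN v⟩ (Tseq i)))
    (hchase : ∀ v : V, ∃ (k : ℕ) (vs : ℕ → V), vs 0 = v ∧ IsChasePath N p T k vs) :
    (∀ v, Tseq (Fintype.card V) v = T v) ∧
      ∀ i, Fintype.card V ≤ i → ∀ v, Tseq i v = T v := by
  classical
  have hcard : 1 ≤ Fintype.card V := Fintype.card_pos
  set n := Fintype.card V with hn
  -- monotone decreasing
  have mono : ∀ i, 1 ≤ i → ∀ v, Tseq (i + 1) v ≤ Tseq i v := by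
    intro i hi v
    rw [hTseqS i hi v]; exact min_le_left _ _
  have anti : ∀ i, 1 ≤ i → ∀ j, i ≤ j → ∀ v, Tseq j v ≤ Tseq i v := by
    intro i hi j
    induction j with
    | zero => intro h; omega
    | succ j ih =>
      intro hij v
      rcases eq_or_lt_of_le hij with h | h
      · rw [← h]
      · exact le_trans (mono j (by omega) v) (ih (by omega) v)
  -- T v ≤ 1 / p v
  have hTle : ∀ v, T v ≤ 1 / p v := by
    intro v
    have h1 := hT v
    have h2 : (N v).inf' ⟨v, hN v⟩ T ≤ T v := Finset.inf'_le _ (hN v)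
    have hp1 : 0 ≤ 1 - p v := by linarith [(hp v).2]
    rw [le_div_iff₀ (hp v).1]
    nlinarith
  -- lower bound
  have lower : ∀ i, 1 ≤ i → ∀ v, T v ≤ Tseq i v := by
    intro i
    induction i with
    | zero => omega
    | succ i ih =>
      intro _ v
      rcases Nat.lt_or_ge 0 i with h | h
      · have hi1 : 1 ≤ i := by omega
        rw [hTseqS i hi1 v]
        refine le_min (ih hi1 v) ?_
        have hinf : (N v).inf' ⟨v, hN v⟩ T ≤ (N v).inf' ⟨v, hN v⟩ (Tseq i) := by
          apply Finset.le_inf'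
          intro w hw
          exact le_trans (Finset.inf'_le _ hw) (ih hi1 w)
        have hp1 : 0 ≤ 1 - p v := by linarith [(hp v).2]
        calc T v = 1 + (1 - p v) * (N v).inf' ⟨v, hN v⟩ T := hT v
          _ ≤ 1 + (1 - p v) * (N v).inf' ⟨v, hN v⟩ (Tseq i) := by nlinarith
      · have hi0 : i = 0 := by omega
        subst hi0
        rw [hTseq1]; exact hTle v
  -- upper bound along a chase path
  have upper : ∀ k vs, IsChasePath N p T k vs →
      ∀ m, ∀ j, j + m = k → Tseq (m + 1) (vs j) ≤ T (vs j) := by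
    intro k vs hcp m
    induction m with
    | zero =>
      intro j hj
      have hj' : j = k := by omega
      have hend := hcp.2
      have hpk := (hp (vs k)).1
      rw [hj', hTseq1, div_le_iff₀ hpk]
      nlinarith
    | succ m ih =>
      intro j hj
      have hjk : j < k := by omega
      obtain ⟨hmem, heq⟩ := hcp.1 j hjk
      have ih' := ih (j + 1) (by omega)
      rw [hTseqS (m + 1) (by omega) (vs j)]
      have h2 : (N (vs j)).inf' ⟨vs j, hN _⟩ (Tseq (m + 1)) ≤ Tseq (m + 1) (vs (j + 1)) :=
        Finset.inf'_le _ hmem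
      have hp1 : 0 ≤ 1 - p (vs j) := by linarith [(hp (vs j)).2]
      have h3 : 1 + (1 - p (vs j)) * (N (vs j)).inf' ⟨vs j, hN _⟩ (Tseq (m + 1)) ≤ T (vs j) := by
        rw [heq]; nlinarith
      exact le_trans (min_le_right _ _) h3
  -- shortening: chase path with k < n
  have short : ∀ v : V, ∃ k, k < n ∧ ∃ vs, vs 0 = v ∧ IsChasePath N p T k vs := by
    intro v
    have hP : ∃ k, ∃ vs : ℕ → V, vs 0 = v ∧ IsChasePath N p T k vs := hchase v
    obtain ⟨vs, hvs0, hcp⟩ := Nat.find_spec hP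
    set k0 := Nat.find hP with hk0
    by_cases hk : k0 < n
    · exact ⟨k0, hk, vs, hvs0, hcp⟩
    push_neg at hk
    exfalso
    have hlt : Fintype.card V < Fintype.card (Fin (k0 + 1)) := by
      simp only [Fintype.card_fin]; omega
    obtain ⟨a0, b0, hab0, heqab⟩ :=
      Fintype.exists_ne_map_eq_of_card_lt (fun i : Fin (k0 + 1) => vs i) hlt
    -- extract a < b ≤ k0 with vs a = vs b
    obtain ⟨a, b, hab, hbk, hveq⟩ : ∃ a b : ℕ, a < b ∧ b ≤ k0 ∧ vs a = vs b := by
      rcases lt_or_gt_of_ne hab0 with h | h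
      · exact ⟨a0, b0, h, by omega, heqab⟩
      · exact ⟨b0, a0, h, by omega, heqab.symm⟩
    set d := b - a with hd
    have hd1 : 1 ≤ d := by omega
    set k' := k0 - d with hk'
    have hk'lt : k' < k0 := by omega
    have hak' : a ≤ k' := by omega
    set vs' : ℕ → V := fun m => if m ≤ a then vs m else vs (m + d) with hvs'
    have epos : ∀ m, m ≤ a → vs' m = vs m := fun m hm => if_pos hm
    have eneg : ∀ m, ¬ m ≤ a → vs' m = vs (m + d) := fun m hm => if_neg hm
    apply Nat.find_min hP hk'lt
    refine ⟨vs', ?_, ?_, ?_⟩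
    · rw [epos 0 (by omega)]; exact hvs0
    · intro i hik
      by_cases h1 : i + 1 ≤ a
      · rw [epos i (by omega), epos (i + 1) h1]
        exact hcp.1 i (by omega)
      · by_cases h2 : i ≤ a
        · have hia : i = a := by omega
          have e2 : vs' (i + 1) = vs (b + 1) := by
            rw [eneg (i + 1) h1]; congr 1; omega
          have hbk0 : b < k0 := by omega
          have hstep := hcp.1 b hbk0
          rw [epos i h2, e2, hia, hveq]
          exact hstep
        · have e1 : vs' i = vs (i + d) := eneg i h2
          have e2 : vs' (i + 1) = vs (i + d + 1) := by
            rw [eneg (i + 1) (by omega)]; congr 1; omega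
          rw [e1, e2]
          exact hcp.1 (i + d) (by omega)
    · by_cases h : k' ≤ a
      · have e : vs' k' = vs k0 := by
          rw [epos k' h]
          have hk'a : k' = a := by omega
          have hbk0 : b = k0 := by omega
          rw [hk'a, hveq, hbk0]
        rw [e]; exact hcp.2
      · have e : vs' k' = vs k0 := by
          rw [eneg k' h]; congr 1; omega
        rw [e]; exact hcp.2
  -- conclusion
  have main : ∀ v, Tseq n v = T v := by
    intro v
    obtain ⟨k, hk, vs, hvs0, hcp⟩ := short v
    have hub : Tseq (k + 1) (vs 0) ≤ T (vs 0) := upper k vs hcp k 0 (by omega)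
    rw [hvs0] at hub
    have h1 : Tseq n v ≤ Tseq (k + 1) v := anti (k + 1) (by omega) n (by omega) v
    have h2 := lower n (by omega) v
    linarith
  refine ⟨main, ?_⟩
  intro i hi v
  have h1 : Tseq i v ≤ Tseq n v := anti n hcard i hi v
  have h2 := lower i (by omega) v
  rw [main v] at h1
  linarith
end

section
/- Let T : V → ℝ be a Bellman fixed point and let (v_0, v_1, …, v_k) be a chase path with respect to T. If T(v_{i+1}) = T(v_i) for some 0 ≤ i < k (i.e., the vertex u = v_{i+1} following v = v_i has the same value of T), then T(v_{i+1}) = T(v_i) = 1/p(v_i) and p(v_{i+1}) ≤ p(v_i). -/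
/-- Let `(v_0, …, v_k)` be a chase path with respect to a Bellman fixed
point `T`. If `T (v_{i+1}) = T (v_i)` for some `0 ≤ i < k`, then
`T (v_{i+1}) = T (v_i) = 1 / p (v_i)` and `p (v_{i+1}) ≤ p (v_i)`. -/
theorem stmt_10 {V : Type*} [Fintype V] [Nonempty V]
    (N : V → Finset V) (hN : ∀ v, v ∈ N v)
    (p : V → ℝ) (hp : ∀ v, 0 < p v ∧ p v ≤ 1)
    (T : V → ℝ)
    (hT : ∀ v, T v = 1 + (1 - p v) * (N v).inf' ⟨v, hN v⟩ T)
    (k : ℕ) (vs : ℕ → V)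
    (hpath : IsChasePath N p T k vs)
    (i : ℕ) (hi : i < k) (heq : T (vs (i + 1)) = T (vs i)) :
    T (vs (i + 1)) = 1 / p (vs i) ∧ T (vs i) = 1 / p (vs i) ∧
      p (vs (i + 1)) ≤ p (vs i) := by
  obtain ⟨hstep, _⟩ := hpath
  obtain ⟨_, hEq⟩ := hstep i hi
  have hpv := hp (vs i)
  have hpu := hp (vs (i + 1))
  have hEq' : T (vs i) = 1 + (1 - p (vs i)) * T (vs i) := by
    conv_lhs => rw [hEq, heq]
  have hTv : T (vs i) = 1 / p (vs i) := by
    rw [eq_div_iff hpv.1.ne']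
    nlinarith [hEq']
  have hTu : T (vs (i + 1)) = 1 / p (vs i) := heq.trans hTv
  refine ⟨hTu, hTv, ?_⟩
  have hmin : (N (vs (i+1))).inf' ⟨_, hN _⟩ T ≤ T (vs (i+1)) :=
    Finset.inf'_le _ (hN _)
  have hTuB := hT (vs (i+1))
  have hTuLe : T (vs (i+1)) ≤ 1 + (1 - p (vs (i+1))) * T (vs (i+1)) := by
    nlinarith [hpu.2]
  have hpos : 0 < T (vs (i+1)) := by rw [hTu]; exact div_pos one_pos hpv.1
  have hkey : p (vs (i+1)) * T (vs (i+1)) ≤ 1 := by nlinarith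
  rw [hTu] at hkey
  have hpvpos := hpv.1
  rw [mul_one_div, div_le_one hpvpos] at hkey
  exact hkey
end

section
/- Let T : V → ℝ be a Bellman fixed point. Then for every vertex w ∈ V, T(w) ≥ 1 / (max_{u ∈ V} p(u)). -/
/-- Let `T` be a Bellman fixed point. Then for every vertex `w`,
`T w ≥ 1 / (max_{u ∈ V} p u)`. -/
theorem stmt_11 {V : Type*} [Fintype V] [Nonempty V]
    (N : V → Finset V) (hN : ∀ v, v ∈ N v)
    (p : V → ℝ) (hp : ∀ v, 0 < p v ∧ p v ≤ 1)
    (T : V → ℝ)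
    (hT : ∀ v, T v = 1 + (1 - p v) * (N v).inf' ⟨v, hN v⟩ T) :
    ∀ w, 1 / (Finset.univ.sup' Finset.univ_nonempty p) ≤ T w := by
  set m := Finset.univ.inf' Finset.univ_nonempty T with hm
  obtain ⟨w0, -, hw0⟩ := Finset.exists_mem_eq_inf' Finset.univ_nonempty T
  have hmin : ∀ v, m ≤ T v := fun v => Finset.inf'_le _ (Finset.mem_univ v)
  have hsub : m ≤ (N w0).inf' ⟨w0, hN w0⟩ T := by
    obtain ⟨u, -, hu⟩ := Finset.exists_mem_eq_inf' (⟨w0, hN w0⟩ : (N w0).Nonempty) T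
    rw [hu]; exact hmin u
  have h1 : 1 + (1 - p w0) * m ≤ m := by
    have hnn : (0:ℝ) ≤ 1 - p w0 := by linarith [(hp w0).2]
    have := mul_le_mul_of_nonneg_left hsub hnn
    calc 1 + (1 - p w0) * m ≤ 1 + (1 - p w0) * (N w0).inf' ⟨w0, hN w0⟩ T := by linarith
      _ = T w0 := (hT w0).symm
      _ = m := hw0.symm
  have hpm : 1 ≤ p w0 * m := by nlinarith
  have hple : p w0 ≤ Finset.univ.sup' Finset.univ_nonempty p :=
    Finset.le_sup' p (Finset.mem_univ w0)
  intro w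
  calc 1 / Finset.univ.sup' Finset.univ_nonempty p ≤ 1 / p w0 :=
        one_div_le_one_div_of_le (hp w0).1 hple
    _ ≤ m := by rw [div_le_iff₀ (hp w0).1]; linarith [hpm]
    _ ≤ T w := hmin w
end

section
/- Let T : V → ℝ be a Bellman fixed point and let v be a vertex with maximal gambler probability, i.e., p(v) = max_{u ∈ V} p(u). Then T(v) = 1/p(v). -/
/-- Let `T` be a Bellman fixed point and let `v` be a vertex with
maximal gambler probability, i.e. `p v = max_{u ∈ V} p u`. Then `T v = 1 / p v`. -/
theorem stmt_12 {V : Type*} [Fintype V] [Nonempty V]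
    (N : V → Finset V) (hN : ∀ v, v ∈ N v)
    (p : V → ℝ) (hp : ∀ v, 0 < p v ∧ p v ≤ 1)
    (T : V → ℝ)
    (hT : ∀ v, T v = 1 + (1 - p v) * (N v).inf' ⟨v, hN v⟩ T)
    (v : V) (hv : p v = Finset.univ.sup' Finset.univ_nonempty p) :
    T v = 1 / p v := by
  set Tmin := Finset.univ.inf' Finset.univ_nonempty T with hTmin
  -- Tmin is achieved
  obtain ⟨w, -, hw⟩ := Finset.exists_mem_eq_inf' Finset.univ_nonempty T
  have hle : ∀ u : V, Tmin ≤ T u := fun u =>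
    Finset.inf'_le _ (Finset.mem_univ u)
  have hpw := hp w
  have hpv := hp v
  have hpwv : p w ≤ p v := hv ▸ Finset.le_sup' p (Finset.mem_univ w)
  -- inf over N w ≥ Tmin
  have h1 : Tmin ≤ (N w).inf' ⟨w, hN w⟩ T := by
    apply Finset.le_inf'
    intro b _; exact hle b
  have h2 : Tmin ≥ 1 + (1 - p w) * Tmin := by
    have hwT : Tmin = T w := hw
    calc 1 + (1 - p w) * Tmin ≤ 1 + (1 - p w) * (N w).inf' ⟨w, hN w⟩ T := by
          have : (0:ℝ) ≤ 1 - p w := by linarith [hpw.2]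
          nlinarith
      _ = T w := (hT w).symm
      _ = Tmin := hwT.symm
  have hTmin_ge : Tmin ≥ 1 / p v := by
    have h3 : p w * Tmin ≥ 1 := by nlinarith
    have h4 : Tmin ≥ 1 / p w := by
      rw [ge_iff_le, div_le_iff₀ hpw.1]; linarith
    have h5 : 1 / p v ≤ 1 / p w := by
      apply one_div_le_one_div_of_le hpw.1 hpwv
    linarith
  have hinf_ge : 1 / p v ≤ (N v).inf' ⟨v, hN v⟩ T := by
    apply Finset.le_inf'
    intro b _; exact le_trans hTmin_ge (hle b)
  have hinf_le : (N v).inf' ⟨v, hN v⟩ T ≤ T v := Finset.inf'_le _ (hN v)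
  have hTv := hT v
  have h1pv : (0:ℝ) ≤ 1 - p v := by linarith [hpv.2]
  have hup : T v ≤ 1 / p v := by
    have : T v ≤ 1 + (1 - p v) * T v := by nlinarith
    rw [le_div_iff₀ hpv.1]; nlinarith
  have hlo : 1 / p v ≤ T v := by
    have : 1 + (1 - p v) * (1 / p v) ≤ T v := by nlinarith
    have e : 1 + (1 - p v) * (1 / p v) = 1 / p v := by
      rw [eq_div_iff (ne_of_gt hpv.1), add_mul, mul_assoc,
        one_div_mul_cancel (ne_of_gt hpv.1)]
      ring
    linarith [e ▸ this]
  linarith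
end

section
/- Let (T_i) be the chase-time iteration. Then for every vertex v, the sequence (T_i(v)) is nonincreasing and converges to T*(v), where T* is the unique Bellman fixed point. -/
/-- Let `(Tseq i)` be the chase-time iteration. Then for every vertex
`v`, the sequence `(Tseq i v)` is nonincreasing (for `i ≥ 1`) and converges to
`Tstar v`, where `Tstar` is the unique Bellman fixed point. -/
theorem stmt_14 {V : Type*} [Fintype V] [Nonempty V]
    (N : V → Finset V) (hN : ∀ v, v ∈ N v)
    (p : V → ℝ) (hp : ∀ v, 0 < p v ∧ p v ≤ 1)
    (Tstar : V → ℝ)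
    (hTstar : ∀ v, Tstar v = 1 + (1 - p v) * (N v).inf' ⟨v, hN v⟩ Tstar)
    (huniq : ∀ T : V → ℝ,
      (∀ v, T v = 1 + (1 - p v) * (N v).inf' ⟨v, hN v⟩ T) → T = Tstar)
    (Tseq : ℕ → V → ℝ)
    (hTseq1 : ∀ v, Tseq 1 v = 1 / p v)
    (hTseqS : ∀ i, 1 ≤ i → ∀ v,
      Tseq (i + 1) v =
        min (Tseq i v) (1 + (1 - p v) * (N v).inf' ⟨v, hN v⟩ (Tseq i))) :
    ∀ v, (∀ i, 1 ≤ i → Tseq (i + 1) v ≤ Tseq i v) ∧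
      Filter.Tendsto (fun i => Tseq i v) Filter.atTop (nhds (Tstar v)) := by
  have hp0 : ∀ v, 0 < p v := fun v => (hp v).1
  have hp1 : ∀ v, 0 ≤ 1 - p v := fun v => by linarith [(hp v).2]
  -- Tstar is bounded above by 1/p
  have hTstar_le : ∀ v, Tstar v ≤ 1 / p v := by
    intro v
    have h1 : (N v).inf' ⟨v, hN v⟩ Tstar ≤ Tstar v := Finset.inf'_le _ (hN v)
    have h2 : Tstar v ≤ 1 + (1 - p v) * Tstar v := by
      have := mul_le_mul_of_nonneg_left h1 (hp1 v)
      linarith [hTstar v]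
    rw [le_div_iff₀ (hp0 v)]
    nlinarith
  -- lower bound: Tstar ≤ Tseq i for i ≥ 1
  have hlb : ∀ i, 1 ≤ i → ∀ v, Tstar v ≤ Tseq i v := by
    intro i
    induction i with
    | zero => omega
    | succ n ih =>
      intro _ v
      rcases Nat.eq_zero_or_pos n with hn | hn
      · subst hn
        rw [hTseq1 v]
        exact hTstar_le v
      · rw [hTseqS n hn v]
        refine le_min (ih hn v) ?_
        obtain ⟨u, hu, hequ⟩ := (N v).exists_mem_eq_inf' ⟨v, hN v⟩ (Tseq n)
        have h3 : (N v).inf' ⟨v, hN v⟩ Tstar ≤ (N v).inf' ⟨v, hN v⟩ (Tseq n) := by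
          rw [hequ]
          exact le_trans (Finset.inf'_le _ hu) (ih hn u)
        rw [hTstar v]
        have := mul_le_mul_of_nonneg_left h3 (hp1 v)
        linarith
  -- monotonicity
  have hmono : ∀ v, ∀ i, 1 ≤ i → Tseq (i + 1) v ≤ Tseq i v := by
    intro v i hi
    rw [hTseqS i hi v]
    exact min_le_left _ _
  -- the limit function
  set L : V → ℝ := fun v => ⨅ i : ℕ, Tseq (i + 1) v with hLdef
  have hbdd : ∀ v, BddBelow (Set.range fun i : ℕ => Tseq (i + 1) v) := by
    intro v
    refine ⟨Tstar v, ?_⟩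
    rintro x ⟨i, rfl⟩
    exact hlb (i + 1) (by omega) v
  have hanti : ∀ v, Antitone (fun i : ℕ => Tseq (i + 1) v) := by
    intro v
    exact antitone_nat_of_succ_le fun n => hmono v (n + 1) (by omega)
  have htend : ∀ v, Filter.Tendsto (fun i : ℕ => Tseq (i + 1) v)
      Filter.atTop (nhds (L v)) := fun v => tendsto_atTop_ciInf (hanti v) (hbdd v)
  have hLle : ∀ v (i : ℕ), L v ≤ Tseq (i + 1) v := fun v i => ciInf_le (hbdd v) i
  have hTstarL : ∀ v, Tstar v ≤ L v := fun v =>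
    le_ciInf fun i => hlb (i + 1) (by omega) v
  -- fixed-point inequality for L
  have hLfix : ∀ v, L v ≤ 1 + (1 - p v) * (N v).inf' ⟨v, hN v⟩ L := by
    intro v
    obtain ⟨u₀, hu₀mem, hu₀⟩ := (N v).exists_mem_eq_inf' ⟨v, hN v⟩ L
    rw [hu₀]
    have htend' : Filter.Tendsto (fun i : ℕ => 1 + (1 - p v) * Tseq (i + 1) u₀)
        Filter.atTop (nhds (1 + (1 - p v) * L u₀)) :=
      (((htend u₀).const_mul (1 - p v)).const_add 1)
    refine ge_of_tendsto' htend' ?_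
    intro i
    have h1 : L v ≤ Tseq (i + 1 + 1) v := hLle v (i + 1)
    have h2 : Tseq (i + 1 + 1) v ≤ 1 + (1 - p v) * (N v).inf' ⟨v, hN v⟩ (Tseq (i + 1)) := by
      rw [hTseqS (i + 1) (by omega) v]
      exact min_le_right _ _
    have h3 : (N v).inf' ⟨v, hN v⟩ (Tseq (i + 1)) ≤ Tseq (i + 1) u₀ :=
      Finset.inf'_le _ hu₀mem
    have := mul_le_mul_of_nonneg_left h3 (hp1 v)
    linarith
  -- max argument to show L ≤ Tstar
  obtain ⟨v₀, -, hv₀⟩ := Finset.exists_max_image Finset.univ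
    (fun v => L v - Tstar v) ⟨Classical.arbitrary V, Finset.mem_univ _⟩
  have hM0 : 0 ≤ L v₀ - Tstar v₀ := sub_nonneg.2 (hTstarL v₀)
  obtain ⟨u₁, hu₁mem, hu₁⟩ := (N v₀).exists_mem_eq_inf' ⟨v₀, hN v₀⟩ Tstar
  have h1 : (N v₀).inf' ⟨v₀, hN v₀⟩ L ≤ Tstar u₁ + (L v₀ - Tstar v₀) := by
    refine le_trans (Finset.inf'_le _ hu₁mem) ?_
    have := hv₀ u₁ (Finset.mem_univ u₁)
    linarith
  have h2 : L v₀ ≤ 1 + (1 - p v₀) * (Tstar u₁ + (L v₀ - Tstar v₀)) := by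
    refine le_trans (hLfix v₀) ?_
    have := mul_le_mul_of_nonneg_left h1 (hp1 v₀)
    linarith
  have hTv₀ : Tstar v₀ = 1 + (1 - p v₀) * Tstar u₁ := by rw [hTstar v₀, hu₁]
  have hMle : L v₀ - Tstar v₀ ≤ 0 := by nlinarith [hp0 v₀]
  have hLeq : ∀ v, L v = Tstar v := by
    intro v
    have := hv₀ v (Finset.mem_univ v)
    have := hTstarL v
    linarith
  -- conclude
  intro v
  refine ⟨hmono v, ?_⟩
  have : Filter.Tendsto (fun i : ℕ => Tseq (i + 1) v) Filter.atTop (nhds (Tstar v)) := by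
    rw [← hLeq v]; exact htend v
  exact (Filter.tendsto_add_atTop_iff_nat 1).1 this
end

section
/- Let T* be the unique Bellman fixed point. Then every vertex v ∈ V has at least one chase path with respect to T* starting at v. -/
/-- Let `Tstar` be the unique Bellman fixed point. Then every vertex
`v` has at least one chase path with respect to `Tstar` starting at `v`. -/
theorem stmt_15 {V : Type*} [Fintype V] [Nonempty V]
    (N : V → Finset V) (hN : ∀ v, v ∈ N v)
    (p : V → ℝ) (hp : ∀ v, 0 < p v ∧ p v ≤ 1)
    (Tstar : V → ℝ)
    (hTstar : ∀ v, Tstar v = 1 + (1 - p v) * (N v).inf' ⟨v, hN v⟩ Tstar)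
    (huniq : ∀ T : V → ℝ,
      (∀ v, T v = 1 + (1 - p v) * (N v).inf' ⟨v, hN v⟩ T) → T = Tstar) :
    ∀ v : V, ∃ (k : ℕ) (vs : ℕ → V), vs 0 = v ∧ IsChasePath N p Tstar k vs := by
  classical
  -- choose an argmin neighbor for every vertex
  have hex : ∀ w : V, ∃ u ∈ N w, (N w).inf' ⟨w, hN w⟩ Tstar = Tstar u := fun w =>
    Finset.exists_mem_eq_inf' ⟨w, hN w⟩ Tstar
  choose f hfmem hfeq using hex
  have hstep : ∀ w, Tstar w = 1 + (1 - p w) * Tstar (f w) := by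
    intro w; rw [hTstar w, hfeq w]
  have hle : ∀ w, Tstar (f w) ≤ Tstar w := by
    intro w
    rw [← hfeq w]
    exact Finset.inf'_le _ (hN w)
  intro v
  set vs : ℕ → V := fun i => f^[i] v with hvs
  have hsucc : ∀ i, vs (i + 1) = f (vs i) := by
    intro i
    simp [hvs, Function.iterate_succ_apply']
  -- Tstar ∘ vs is antitone
  have hanti : Antitone (fun i => Tstar (vs i)) := by
    apply antitone_nat_of_succ_le
    intro i
    rw [hsucc i]
    exact hle _
  -- by finiteness, vs repeats
  obtain ⟨i, j, hij, heq⟩ := Finite.exists_ne_map_eq_of_infinite vs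
  wlog h : i < j generalizing i j
  · exact this j i hij.symm heq.symm (by omega)
  have h1 : Tstar (vs (i + 1)) = Tstar (vs i) := by
    refine le_antisymm (hanti (Nat.le_succ i)) ?_
    calc Tstar (vs i) = Tstar (vs j) := by rw [heq]
      _ ≤ Tstar (vs (i + 1)) := hanti h
  refine ⟨i, vs, by simp [hvs], ?_, ?_⟩
  · intro m hm
    exact ⟨by rw [hsucc m]; exact hfmem _, by rw [hsucc m]; exact hstep _⟩
  · calc Tstar (vs i) = 1 + (1 - p (vs i)) * Tstar (vs (i + 1)) := by
          rw [hsucc]; exact hstep _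
      _ = 1 + (1 - p (vs i)) * Tstar (vs i) := by rw [h1]
end

section
/- Let (T_i) be the chase-time iteration, let T* be the unique Bellman fixed point, and let n = |V|. Then T_n(v) = T*(v) for every vertex v; in particular, the chase-time iteration stabilizes after at most n rounds. -/
/-- Let `(Tseq i)` be the chase-time iteration, `Tstar` the unique
Bellman fixed point, and `n = |V|`. Then `Tseq n v = Tstar v` for every vertex `v`;
in particular the iteration stabilizes after at most `n` rounds, i.e.
`Tseq i v = Tstar v` for every `i ≥ n`. -/
theorem stmt_16 {V : Type*} [Fintype V] [Nonempty V]
    (N : V → Finset V) (hN : ∀ v, v ∈ N v)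
    (p : V → ℝ) (hp : ∀ v, 0 < p v ∧ p v ≤ 1)
    (Tstar : V → ℝ)
    (hTstar : ∀ v, Tstar v = 1 + (1 - p v) * (N v).inf' ⟨v, hN v⟩ Tstar)
    (huniq : ∀ T : V → ℝ,
      (∀ v, T v = 1 + (1 - p v) * (N v).inf' ⟨v, hN v⟩ T) → T = Tstar)
    (Tseq : ℕ → V → ℝ)
    (hTseq1 : ∀ v, Tseq 1 v = 1 / p v)
    (hTseqS : ∀ i, 1 ≤ i → ∀ v,
      Tseq (i + 1) v =
        min (Tseq i v) (1 + (1 - p v) * (N v).inf' ⟨v, hN v⟩ (Tseq i))) :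
    (∀ v, Tseq (Fintype.card V) v = Tstar v) ∧
      ∀ i, Fintype.card V ≤ i → ∀ v, Tseq i v = Tstar v := by
  have hp0 : ∀ v, 0 < p v := fun v => (hp v).1
  have h1p : ∀ v, 0 ≤ 1 - p v := fun v => by linarith [(hp v).2]
  -- upper bound: Tstar v ≤ 1 / p v
  have hub : ∀ v, Tstar v ≤ 1 / p v := by
    intro v
    have hinf : (N v).inf' ⟨v, hN v⟩ Tstar ≤ Tstar v := Finset.inf'_le _ (hN v)
    have h2 : Tstar v ≤ 1 + (1 - p v) * Tstar v := by
      nlinarith [hTstar v, mul_le_mul_of_nonneg_left hinf (h1p v)]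
    rw [le_div_iff₀ (hp0 v)]
    nlinarith
  -- lower bound: Tstar ≤ Tseq i for i ≥ 1
  have hlb : ∀ i, 1 ≤ i → ∀ v, Tstar v ≤ Tseq i v := by
    intro i hi
    induction i, hi using Nat.le_induction with
    | base => intro v; rw [hTseq1]; exact hub v
    | succ i hi ih =>
      intro v
      rw [hTseqS i hi]
      refine le_min (ih v) ?_
      have hinfs : (N v).inf' ⟨v, hN v⟩ Tstar ≤ (N v).inf' ⟨v, hN v⟩ (Tseq i) :=
        Finset.le_inf' _ _ fun u hu => le_trans (Finset.inf'_le _ hu) (ih u)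
      nlinarith [hTstar v, mul_le_mul_of_nonneg_left hinfs (h1p v)]
  -- Tseq is decreasing
  have hdec : ∀ i j, 1 ≤ i → i ≤ j → ∀ v, Tseq j v ≤ Tseq i v := by
    intro i j hi hij
    induction j, hij using Nat.le_induction with
    | base => intro v; exact le_refl _
    | succ j hij ih =>
      intro v
      rw [hTseqS j (le_trans hi hij)]
      exact le_trans (min_le_left _ _) (ih v)
  -- key lemma by rank induction
  have hmain : ∀ i, 1 ≤ i → ∀ v : V,
      (Finset.univ.filter (fun u => Tstar u < Tstar v)).card < i → Tseq i v = Tstar v := by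
    intro i hi
    induction i, hi using Nat.le_induction with
    | base =>
      intro v hv
      have hempty : ∀ u : V, ¬ Tstar u < Tstar v := by
        intro u hu
        have : u ∈ Finset.univ.filter (fun u => Tstar u < Tstar v) := by
          simp [hu]
        have := Finset.card_pos.2 ⟨u, this⟩
        omega
      have hmin : Tstar v ≤ (N v).inf' ⟨v, hN v⟩ Tstar :=
        Finset.le_inf' _ _ fun u _ => not_lt.1 (hempty u)
      have hge : 1 / p v ≤ Tstar v := by
        rw [div_le_iff₀ (hp0 v)]
        nlinarith [hTstar v, mul_le_mul_of_nonneg_left hmin (h1p v)]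
      rw [hTseq1]
      linarith [hub v]
    | succ i hi ih =>
      intro v hv
      obtain ⟨u, hu, hequ⟩ := Finset.exists_mem_eq_inf' ⟨v, hN v⟩ Tstar (s := N v)
      rcases le_or_gt (Tstar v) (Tstar u) with h | h
      · -- inf' Tstar over N v ≥ Tstar v, as in base case: Tstar v = 1 / p v
        have hmin : Tstar v ≤ (N v).inf' ⟨v, hN v⟩ Tstar := by rw [hequ]; exact h
        have hge : 1 / p v ≤ Tstar v := by
          rw [div_le_iff₀ (hp0 v)]
          nlinarith [hTstar v, mul_le_mul_of_nonneg_left hmin (h1p v)]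
        have h1 : Tseq (i + 1) v ≤ Tseq 1 v := hdec 1 (i + 1) le_rfl (by omega) v
        rw [hTseq1] at h1
        have := hlb (i + 1) (by omega) v
        linarith [hub v]
      · -- there is u ∈ N v with Tstar u < Tstar v achieving the inf
        have hsub : Finset.univ.filter (fun w => Tstar w < Tstar u) ⊆
            Finset.univ.filter (fun w => Tstar w < Tstar v) := by
          intro w hw
          simp only [Finset.mem_filter, Finset.mem_univ, true_and] at hw ⊢
          exact lt_trans hw h
        have hss : Finset.univ.filter (fun w => Tstar w < Tstar u) ⊂
            Finset.univ.filter (fun w => Tstar w < Tstar v) := by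
          refine (Finset.ssubset_iff_of_subset hsub).2 ⟨u, ?_, ?_⟩
          · simp [h]
          · simp
        have hcard : (Finset.univ.filter (fun w => Tstar w < Tstar u)).card < i :=
          lt_of_lt_of_le (Finset.card_lt_card hss) (by omega)
        have hIHu : Tseq i u = Tstar u := ih u hcard
        have hinfle : (N v).inf' ⟨v, hN v⟩ (Tseq i) ≤ Tstar u := by
          rw [← hIHu]; exact Finset.inf'_le _ hu
        have hle : Tseq (i + 1) v ≤ Tstar v := by
          rw [hTseqS i hi]
          refine le_trans (min_le_right _ _) ?_
          rw [hTstar v, hequ]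
          nlinarith [mul_le_mul_of_nonneg_left hinfle (h1p v)]
        exact le_antisymm hle (hlb (i + 1) (by omega) v)
  have hcardpos : 1 ≤ Fintype.card V := Fintype.card_pos
  have hn : ∀ v, Tseq (Fintype.card V) v = Tstar v := by
    intro v
    refine hmain _ hcardpos v ?_
    have : v ∉ Finset.univ.filter (fun u => Tstar u < Tstar v) := by simp
    calc (Finset.univ.filter (fun u => Tstar u < Tstar v)).card
        < Finset.univ.card := Finset.card_lt_card
          ((Finset.ssubset_iff_of_subset (Finset.subset_univ _)).2
            ⟨v, Finset.mem_univ v, this⟩)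
      _ = Fintype.card V := Finset.card_univ
  refine ⟨hn, ?_⟩
  intro i hi
  induction i, hi using Nat.le_induction with
  | base => exact hn
  | succ i hi ih =>
    intro v
    rw [hTseqS i (le_trans hcardpos hi)]
    have hinfeq : (N v).inf' ⟨v, hN v⟩ (Tseq i) = (N v).inf' ⟨v, hN v⟩ Tstar :=
      Finset.inf'_congr _ rfl fun u _ => ih u
    rw [ih v, hinfeq, ← hTstar v, min_self]
end
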